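/- For every permutation π of {1,…,n}, the block sorting distance satisfies bs(π) ≥ rev(π). -/

import Mathlib

/-- A run: each element is the successor of the previous one. -/
def IsRun (l : List ℕ) : Prop := l.Chain' (fun a b => b = a + 1)

/-- `noLink x y`: the optional value `y` does not continue the optional value `x` by +1. -/
def noLink (x y : Option ℕ) : Prop := ∀ a ∈ x, ∀ b ∈ y, b ≠ a + 1

/-- Number of "breaks" between consecutive entries (places where the successor chain stops). -/
def breaks (l : List ℕ) : ℕ := (l.zip l.tail).countP (fun p => decide (p.2 ≠ p.1 + 1))

/-- Number of strips (maximal runs of consecutive increasing values). -/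
def numStrips (l : List ℕ) : ℕ := if l = [] then 0 else 1 + breaks l

/-- Number of reversals (descents): adjacent pairs with the left entry larger. -/
def revCount (l : List ℕ) : ℕ := (l.zip l.tail).countP (fun p => decide (p.2 < p.1))

/-- `π'` is obtained from `π` by swapping two (disjoint) strips of `π`. -/
def StripSwap (π π' : List ℕ) : Prop :=
  ∃ A X B Y C : List ℕ,
    π = A ++ X ++ B ++ Y ++ C ∧
    π' = A ++ Y ++ B ++ X ++ C ∧
    X ≠ [] ∧ Y ≠ [] ∧ IsRun X ∧ IsRun Y ∧
    noLink A.getLast? X.head? ∧ noLink X.getLast? (B ++ Y ++ C).head? ∧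
    noLink (A ++ X ++ B).getLast? Y.head? ∧ noLink Y.getLast? C.head?

/-- `π'` is obtained from `π` by removing one strip and reinserting it at another position. -/
def BlockMove (π π' : List ℕ) : Prop :=
  ∃ A X B A' B' : List ℕ,
    π = A ++ X ++ B ∧
    X ≠ [] ∧ IsRun X ∧
    noLink A.getLast? X.head? ∧ noLink X.getLast? B.head? ∧
    A' ++ B' = A ++ B ∧ A' ≠ A ∧
    π' = A' ++ X ++ B'

/-- `StepsTo R k a b`: `b` is reachable from `a` in exactly `k` steps of the relation `R`. -/
def StepsTo (R : List ℕ → List ℕ → Prop) : ℕ → List ℕ → List ℕ → Prop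
  | 0 => fun a b => a = b
  | k + 1 => fun a b => ∃ c, R a c ∧ StepsTo R k c b

/-- The identity permutation of `{1,…,n}` in one-line notation. -/
def idPerm (n : ℕ) : List ℕ := List.range' 1 n

/-- Strip swap distance to the identity permutation of `{1,…,n}`. -/
noncomputable def SSD (n : ℕ) (π : List ℕ) : ℕ :=
  sInf {m | StepsTo StripSwap m π (idPerm n)}

/-- Block sorting distance to the identity permutation of `{1,…,n}`. -/
noncomputable def BS (n : ℕ) (π : List ℕ) : ℕ :=
  sInf {m | StepsTo BlockMove m π (idPerm n)}

/-- junction descent count -/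
def jn (L M : List ℕ) : ℕ :=
  match L.getLast?, M.head? with
  | some a, some b => if b < a then 1 else 0
  | _, _ => 0

theorem revCount_nil : revCount [] = 0 := rfl
theorem revCount_single (a : ℕ) : revCount [a] = 0 := rfl

theorem revCount_cons_cons (a b : ℕ) (t : List ℕ) :
    revCount (a :: b :: t) = (if b < a then 1 else 0) + revCount (b :: t) := by
  simp [revCount, List.countP_cons]
  omega

theorem jn_some_some (L M : List ℕ) (a b : ℕ) (hL : L.getLast? = some a)
    (hM : M.head? = some b) : jn L M = if b < a then 1 else 0 := by
  unfold jn; rw [hL, hM]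

theorem jn_none_left (L M : List ℕ) (hL : L.getLast? = none) : jn L M = 0 := by
  unfold jn; rw [hL]

theorem jn_none_right (L M : List ℕ) (hM : M.head? = none) : jn L M = 0 := by
  unfold jn; rw [hM]; cases L.getLast? <;> rfl

theorem jn_nil_left (M : List ℕ) : jn [] M = 0 := by simp [jn]
theorem jn_nil_right (L : List ℕ) : jn L [] = 0 := by
  unfold jn; cases L.getLast? <;> simp

theorem jn_cons_cons (a b : ℕ) (t M : List ℕ) : jn (a :: b :: t) M = jn (b :: t) M := by
  unfold jn; rw [List.getLast?_cons_cons]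

theorem revCount_append (L M : List ℕ) :
    revCount (L ++ M) = revCount L + jn L M + revCount M := by
  induction L with
  | nil => simp [revCount_nil, jn_nil_left]
  | cons a L ih =>
    cases L with
    | nil =>
      cases M with
      | nil => simp [revCount_single, jn_nil_right, revCount_nil]
      | cons b t =>
        simp only [List.singleton_append, revCount_cons_cons, revCount_single]
        simp [jn]
    | cons b t =>
      simp only [List.cons_append, revCount_cons_cons, jn_cons_cons] at *
      omega

theorem isRun_cons_iff (a : ℕ) (t : List ℕ) :
    IsRun (a :: t) ↔ (∀ b ∈ t.head?, b = a + 1) ∧ IsRun t := by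
  simp [IsRun, List.Chain', List.isChain_cons]

theorem revCount_of_isRun (l : List ℕ) (h : IsRun l) : revCount l = 0 := by
  induction l with
  | nil => rfl
  | cons a t ih =>
    rw [isRun_cons_iff] at h
    cases t with
    | nil => rfl
    | cons b s =>
      rw [revCount_cons_cons, ih h.2]
      have hb : b = a + 1 := h.1 b (by simp)
      simp [hb]

theorem isRun_eq_range' (l : List ℕ) (h : IsRun l) (a : ℕ) (ha : l.head? = some a) :
    l = List.range' a l.length := by
  induction l generalizing a with
  | nil => simp at ha
  | cons x t ih =>
    have hx : a = x := by simpa using ha.symm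
    subst hx
    rw [isRun_cons_iff] at h
    cases t with
    | nil => simp [List.range']
    | cons b s =>
      have hb : b = a + 1 := h.1 b (by simp)
      have := ih h.2 b (by simp)
      rw [List.length_cons, List.range'_succ, ← hb, ← this]

theorem getLast?_range' (a L : ℕ) (hL : 1 ≤ L) :
    (List.range' a L).getLast? = some (a + L - 1) := by
  obtain ⟨L', rfl⟩ : ∃ L', L = L' + 1 := ⟨L - 1, by omega⟩
  rw [List.range'_concat, List.getLast?_append_of_ne_nil _ (by simp)]
  simp

theorem head?_range' (a L : ℕ) (hL : 1 ≤ L) :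
    (List.range' a L).head? = some a := by
  obtain ⟨L', rfl⟩ : ∃ L', L = L' + 1 := ⟨L - 1, by omega⟩
  rw [List.range'_succ]; rfl

/-- key interval inequality for junctions -/
theorem jn_interval (A B : List ℕ) (h L : ℕ) (hL : 1 ≤ L)
    (hA : ∀ a ∈ A.getLast?, a < h ∨ h + L ≤ a)
    (hB : ∀ b ∈ B.head?, b < h ∨ h + L ≤ b) :
    jn A B ≤ jn A (List.range' h L) + jn (List.range' h L) B ∧
    jn A (List.range' h L) + jn (List.range' h L) B ≤ 1 + jn A B := by
  have hXl := getLast?_range' h L hL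
  have hXh := head?_range' h L hL
  cases hAl : A.getLast? with
  | none =>
    rw [jn_none_left A B hAl, jn_none_left A _ hAl]
    cases hBh : B.head? with
    | none => rw [jn_none_right _ B hBh]; omega
    | some b =>
      rw [jn_some_some _ B _ b hXl hBh]
      refine ⟨Nat.zero_le _, ?_⟩; split <;> simp
  | some a =>
    have ha := hA a (by rw [hAl]; rfl)
    rw [jn_some_some A _ a h hAl hXh]
    cases hBh : B.head? with
    | none =>
      rw [jn_none_right A B hBh, jn_none_right _ B hBh]
      refine ⟨Nat.zero_le _, ?_⟩; split <;> simp
    | some b =>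
      have hb := hB b (by rw [hBh]; rfl)
      rw [jn_some_some A B a b hAl hBh, jn_some_some _ B _ b hXl hBh]
      refine ⟨?_, ?_⟩ <;> (split <;> split <;> split <;> omega)


theorem blockMove_perm {π π' : List ℕ} (h : BlockMove π π') : π'.Perm π := by
  obtain ⟨A, X, B, A', B', rfl, -, -, -, -, hAB, -, rfl⟩ := h
  refine List.perm_iff_count.mpr fun y => ?_
  have := congrArg (List.count y) hAB
  simp only [List.count_append] at *
  omega

/-- splitting revCount of a three-part concatenation with middle run -/
theorem revCount_three (A X B : List ℕ) (hX : X ≠ []) (hrun : IsRun X) :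
    revCount (A ++ X ++ B) = revCount A + revCount B + (jn A X + jn X B) := by
  rw [List.append_assoc, revCount_append, revCount_append, revCount_of_isRun X hrun]
  have : jn A (X ++ B) = jn A X := by
    unfold jn; rw [List.head?_append_of_ne_nil X hX]
  omega

theorem blockMove_revCount {π π' : List ℕ} (h : BlockMove π π') (hnd : π.Nodup) :
    revCount π ≤ revCount π' + 1 := by
  obtain ⟨A, X, B, A', B', rfl, hXne, hrun, -, -, hAB, -, rfl⟩ := h
  obtain ⟨hd, hhd⟩ : ∃ hd, X.head? = some hd := by
    cases X with | nil => exact absurd rfl hXne | cons a t => exact ⟨a, rfl⟩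
  have hXr : X = List.range' hd X.length := isRun_eq_range' X hrun hd hhd
  have hL : 1 ≤ X.length := List.length_pos_iff.mpr hXne
  -- everything in A ++ B is outside the interval of X
  have hout : ∀ y ∈ A ++ B, y < hd ∨ hd + X.length ≤ y := by
    intro y hy
    have hnotX : y ∉ X := by
      rw [List.append_assoc] at hnd
      rcases List.mem_append.mp hy with hyA | hyB
      · intro hyX
        exact (List.disjoint_of_nodup_append hnd) hyA (List.mem_append_left B hyX)
      · intro hyX
        exact (List.disjoint_of_nodup_append (hnd.of_append_right)) hyX hyB
    rw [hXr, List.mem_range'_1] at hnotX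
    omega
  have houtA : ∀ a ∈ A.getLast?, a < hd ∨ hd + X.length ≤ a :=
    fun a ha => hout a (List.mem_append_left B (List.mem_of_mem_getLast? ha))
  have houtB : ∀ b ∈ B.head?, b < hd ∨ hd + X.length ≤ b :=
    fun b hb => hout b (List.mem_append_right A (List.mem_of_mem_head? hb))
  have houtA' : ∀ a ∈ A'.getLast?, a < hd ∨ hd + X.length ≤ a := by
    intro a ha
    refine hout a ?_
    rw [← hAB]
    exact List.mem_append_left B' (List.mem_of_mem_getLast? ha)
  have houtB' : ∀ b ∈ B'.head?, b < hd ∨ hd + X.length ≤ b := by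
    intro b hb
    refine hout b ?_
    rw [← hAB]
    exact List.mem_append_right A' (List.mem_of_mem_head? hb)
  have h1 := jn_interval A B hd X.length hL houtA houtB
  have h2 := jn_interval A' B' hd X.length hL houtA' houtB'
  rw [← hXr] at h1 h2
  have e1 := revCount_three A X B hXne hrun
  have e2 := revCount_three A' X B' hXne hrun
  have e3 : revCount A + revCount B + jn A B = revCount A' + revCount B' + jn A' B' := by
    have := revCount_append A B
    have := revCount_append A' B'
    rw [hAB] at *
    omega
  omega

/-- split a list at the first occurrence of `v` -/
def splitAtVal (v : ℕ) : List ℕ → List ℕ × List ℕ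
  | [] => ([], [])
  | a :: l => if a = v then ([], a :: l) else
      ((a :: (splitAtVal v l).1), (splitAtVal v l).2)

theorem splitAtVal_append (v : ℕ) (l : List ℕ) :
    (splitAtVal v l).1 ++ (splitAtVal v l).2 = l := by
  induction l with
  | nil => rfl
  | cons a l ih =>
    by_cases h : a = v <;> simp [splitAtVal, h, ih]

theorem splitAtVal_head (v : ℕ) (l : List ℕ) (hv : v ∈ l) :
    (splitAtVal v l).2.head? = some v := by
  induction l with
  | nil => simp at hv
  | cons a l ih =>
    by_cases h : a = v
    · subst h; simp [splitAtVal]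
    · have hvl : v ∈ l := (List.mem_cons.mp hv).resolve_left (fun e => h e.symm)
      simp [splitAtVal, h, ih hvl]

theorem splitAtVal_not_mem_fst (v : ℕ) (l : List ℕ) : v ∉ (splitAtVal v l).1 := by
  induction l with
  | nil => simp [splitAtVal]
  | cons a l ih =>
    by_cases h : a = v <;> simp [splitAtVal, h, ih]
    omega

theorem splitAtVal_prefix (v : ℕ) (u w : List ℕ) (hu : v ∉ u) :
    splitAtVal v (u ++ w) = (u ++ (splitAtVal v w).1, (splitAtVal v w).2) := by
  induction u with
  | nil => simp
  | cons a u ih =>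
    have ha : a ≠ v := fun h => hu (h ▸ List.mem_cons_self (a := a) (l := u))
    have hu' : v ∉ u := fun h => hu (List.mem_cons_of_mem a h)
    simp [splitAtVal, ha, ih hu']

/-- split off the maximal run prefix -/
def runSplit : List ℕ → List ℕ × List ℕ
  | [] => ([], [])
  | [a] => ([a], [])
  | a :: b :: t =>
    if b = a + 1 then ((a :: (runSplit (b :: t)).1), (runSplit (b :: t)).2)
    else ([a], b :: t)

theorem runSplit_append : ∀ l : List ℕ, (runSplit l).1 ++ (runSplit l).2 = l
  | [] => rfl
  | [a] => rfl
  | a :: b :: t => by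
    simp only [runSplit]
    split
    · simp [runSplit_append (b :: t)]
    · rfl

theorem runSplit_fst_ne : ∀ l : List ℕ, l ≠ [] → (runSplit l).1 ≠ []
  | [], h => absurd rfl h
  | [a], _ => by simp [runSplit]
  | a :: b :: t, _ => by
    by_cases h : b = a + 1 <;> simp [runSplit, h]

theorem runSplit_head : ∀ l : List ℕ, (runSplit l).1.head? = l.head?
  | [] => rfl
  | [a] => rfl
  | a :: b :: t => by
    by_cases h : b = a + 1 <;> simp [runSplit, h]

theorem runSplit_run : ∀ l : List ℕ, IsRun (runSplit l).1
  | [] => by simp [runSplit, IsRun, List.Chain']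
  | [a] => by simp [runSplit, IsRun, List.Chain']
  | a :: b :: t => by
    by_cases h : b = a + 1
    · simp only [runSplit, if_pos h]
      rw [isRun_cons_iff]
      refine ⟨?_, runSplit_run (b :: t)⟩
      intro c hc
      rw [runSplit_head (b :: t)] at hc
      simp at hc
      omega
    · simp [runSplit, h, IsRun, List.Chain']

theorem runSplit_noLink : ∀ l : List ℕ,
    noLink (runSplit l).1.getLast? (runSplit l).2.head?
  | [] => by simp [runSplit, noLink]
  | [a] => by simp [runSplit, noLink]
  | a :: b :: t => by
    by_cases h : b = a + 1
    · simp only [runSplit, if_pos h]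
      intro x hx y hy
      have h1 := runSplit_fst_ne (b :: t) (by simp)
      rw [show a :: (runSplit (b :: t)).1 = [a] ++ (runSplit (b :: t)).1 from rfl,
        List.getLast?_append_of_ne_nil _ h1] at hx
      exact runSplit_noLink (b :: t) x hx y hy
    · simp only [runSplit, h, if_neg h]
      intro x hx y hy
      simp at hx hy
      subst hx; subst hy
      exact h


theorem eq_idPerm_of_take (n k : ℕ) (π : List ℕ) (hperm : π.Perm (idPerm n))
    (htake : π.take k = List.range' 1 k) (hkn : n ≤ k) : π = idPerm n := by
  have hlen : π.length = n := by simpa [idPerm] using hperm.length_eq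
  have hk : k ≤ n := by
    have := congrArg List.length htake
    simp [hlen] at this
    omega
  have : k = n := le_antisymm hk hkn
  subst this
  rw [← List.take_of_length_le (le_of_eq hlen), htake]; rfl

theorem sort_steps (n : ℕ) : ∀ d k π, π.Perm (idPerm n) → π.take k = List.range' 1 k →
    n - k ≤ d → ∃ m, StepsTo BlockMove m π (idPerm n) := by
  intro d
  induction d with
  | zero =>
    intro k π hperm htake hd
    exact ⟨0, eq_idPerm_of_take n k π hperm htake (by omega)⟩
  | succ d ih =>
    intro k π hperm htake hd
    by_cases hkn : n ≤ k
    · exact ⟨0, eq_idPerm_of_take n k π hperm htake hkn⟩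
    push_neg at hkn
    have hlen : π.length = n := by simpa [idPerm] using hperm.length_eq
    have hnd : π.Nodup := hperm.nodup_iff.mpr (List.nodup_range' ..)
    have hmem : k + 1 ∈ π := by
      rw [hperm.mem_iff, idPerm, List.mem_range'_1]
      omega
    -- decompose π
    have hπ0 : π = List.range' 1 k ++ π.drop k := by
      conv_lhs => rw [← List.take_append_drop k π, htake]
    set P := π.drop k with hP
    have hmemP : k + 1 ∈ P := by
      rcases List.mem_append.mp (hπ0 ▸ hmem) with h | h
      · rw [List.mem_range'_1] at h; omega
      · exact h
    set A₂ := (splitAtVal (k+1) P).1 with hA₂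
    set C := (splitAtVal (k+1) P).2 with hCdef
    have hPC : A₂ ++ C = P := splitAtVal_append (k+1) P
    have hCh : C.head? = some (k+1) := splitAtVal_head (k+1) P hmemP
    have hCne : C ≠ [] := by intro h; rw [h] at hCh; simp at hCh
    set X := (runSplit C).1 with hXdef
    set B := (runSplit C).2 with hBdef
    have hXB : X ++ B = C := runSplit_append C
    have hXne : X ≠ [] := runSplit_fst_ne C hCne
    have hXh : X.head? = some (k+1) := (runSplit_head C).trans hCh
    have hrun : IsRun X := runSplit_run C
    have hπ : π = (List.range' 1 k ++ A₂) ++ X ++ B := by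
      rw [hπ0, ← hPC, ← hXB]; simp [List.append_assoc]
    have hXlen : 1 ≤ X.length := List.length_pos_iff.mpr hXne
    have hXr : X = List.range' (k+1) X.length := isRun_eq_range' X hrun (k+1) hXh
    obtain ⟨L, hL⟩ : ∃ L, X.length = L := ⟨_, rfl⟩
    rw [hL] at hXr hXlen
    have hr : List.range' 1 k ++ List.range' (k+1) L = List.range' 1 (k + L) := by
      have h0 := List.range'_append_1 (s := 1) (m := k) (n := L)
      rw [Nat.add_comm 1 k] at h0
      exact h0
    have hlenpref : (List.range' 1 (k + L)).length = k + L := by simp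
    by_cases hA2 : A₂ = []
    · -- no move needed; the prefix is already longer than k
      have hπ1 : π = List.range' 1 (k + L) ++ B := by
        rw [hπ, hA2, hXr]
        rw [List.append_nil, hr]
      refine ih (k + L) π hperm ?_ (by omega)
      rw [hπ1, List.take_left' hlenpref]
    · -- perform one block move
      set A := List.range' 1 k ++ A₂ with hAdef
      have hA2sub : ∀ a ∈ A₂, a ∈ P := fun a ha => hPC ▸ List.mem_append_left C ha
      have hkP : ∀ a ∈ P, a ≠ k := by
        intro a ha hak
        subst hak
        rcases Nat.eq_zero_or_pos a with rfl | hpos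
        · have : (0:ℕ) ∈ π := hπ0 ▸ List.mem_append_right _ ha
          rw [hperm.mem_iff, idPerm, List.mem_range'_1] at this
          omega
        · have hdisj := List.disjoint_of_nodup_append (hπ0 ▸ hnd)
          exact hdisj (List.mem_range'_1.mpr ⟨hpos, by omega⟩) ha
      have hnlA : noLink A.getLast? X.head? := by
        intro a ha b hb
        rw [hXh] at hb
        have hb' : b = k + 1 := by simp at hb; omega
        rw [hAdef, List.getLast?_append_of_ne_nil _ hA2] at ha
        have haA : a ∈ A₂ := List.mem_of_mem_getLast? ha
        have := hkP a (hA2sub a haA)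
        omega
      have hA'A : List.range' 1 k ≠ A := by
        intro h
        have h2 := congrArg List.length h
        simp only [hAdef, List.length_append, List.length_range'] at h2
        have : A₂.length = 0 := by omega
        exact hA2 (List.length_eq_zero_iff.mp this)
      have hmove : BlockMove π (List.range' 1 k ++ X ++ (A₂ ++ B)) := by
        exact ⟨A, X, B, List.range' 1 k, A₂ ++ B, hπ, hXne, hrun, hnlA,
          runSplit_noLink C, (List.append_assoc _ _ _).symm, hA'A, rfl⟩
      have hπ'perm : (List.range' 1 k ++ X ++ (A₂ ++ B)).Perm (idPerm n) :=
        (blockMove_perm hmove).trans hperm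
      have hπ'take : (List.range' 1 k ++ X ++ (A₂ ++ B)).take (k + L) =
          List.range' 1 (k + L) := by
        rw [hXr, hr, List.take_left' hlenpref]
      obtain ⟨m, hm⟩ := ih (k + L) _ hπ'perm hπ'take (by omega)
      exact ⟨m + 1, _, hmove, hm⟩

theorem isRun_range' (a n : ℕ) : IsRun (List.range' a n) := by
  induction n generalizing a with
  | zero => simp [IsRun, List.Chain']
  | succ n ih =>
    rw [List.range'_succ, isRun_cons_iff]
    refine ⟨?_, ih (a+1)⟩
    intro b hb
    cases n with
    | zero => simp at hb
    | succ n => rw [head?_range' _ _ (by omega)] at hb; simpa using hb.symm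

theorem revCount_idPerm (n : ℕ) : revCount (idPerm n) = 0 :=
  revCount_of_isRun _ (isRun_range' 1 n)

theorem steps_revCount (n : ℕ) : ∀ m π, π.Perm (idPerm n) →
    StepsTo BlockMove m π (idPerm n) → revCount π ≤ m := by
  intro m
  induction m with
  | zero =>
    intro π hp hs
    rw [show π = idPerm n from hs, revCount_idPerm]
  | succ m ih =>
    intro π hp hs
    obtain ⟨c, hmc, hsteps⟩ := hs
    have hnd : π.Nodup := hp.nodup_iff.mpr (List.nodup_range' ..)
    have h1 : revCount π ≤ revCount c + 1 := blockMove_revCount hmc hnd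
    have hcperm : c.Perm (idPerm n) := ((blockMove_perm hmc).trans hp)
    have h2 : revCount c ≤ m := ih c hcperm hsteps
    omega

/-- `bs(π) ≥ rev(π)`. -/
theorem BS_ge_rev (n : ℕ) (π : List ℕ) (hperm : π.Perm (idPerm n)) :
    BS n π ≥ revCount π := by
  have hne : {m | StepsTo BlockMove m π (idPerm n)}.Nonempty :=
    sort_steps n n 0 π hperm (by simp) (by omega)
  have hmem := Nat.sInf_mem hne
  exact steps_revCount n _ π hperm hmem
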